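/- Let f ∈ ℝ^n, f ≠ 0, and suppose 0 is a median of f, i.e. 0 minimizes c ↦ Σ_{i=1}^n |f_i − c|. Then F₁(f) ≥ min over all t ∈ ℝ for which the threshold set C_t = {i : f_i > t} is nonempty and proper of RCC(C_t, C̄_t). -/

import Mathlib

open Finset

/-- Total variation `TV(f) = ½ Σ_{i,j} w_ij |f_i − f_j|`. -/
noncomputable def TV {n : ℕ} (W : Fin n → Fin n → ℝ) (f : Fin n → ℝ) : ℝ :=
  (1 / 2) * ∑ i, ∑ j, W i j * |f i - f j|

/-- `F₁(f) = TV(f) / ‖f‖₁`. -/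
noncomputable def F1 {n : ℕ} (W : Fin n → Fin n → ℝ) (f : Fin n → ℝ) : ℝ :=
  TV W f / ∑ i, |f i|

/-- Ratio Cheeger cut of the partition `(C, Cᶜ)`. -/
noncomputable def RCC {n : ℕ} (W : Fin n → Fin n → ℝ) (C : Finset (Fin n)) : ℝ :=
  (∑ i ∈ C, ∑ j ∈ Cᶜ, W i j) / min (C.card : ℝ) (Cᶜ.card : ℝ)

open MeasureTheory

/-- integral of an indicator of `Ico a b` with constant value `c`. -/
private lemma indic_int (a b c : ℝ) :
    ∫ t, Set.indicator (Set.Ico a b) (fun _ => c) t = max (b - a) 0 * c := by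
  rw [MeasureTheory.integral_indicator_const _ measurableSet_Ico, Real.volume_real_Ico,
    smul_eq_mul]

private lemma indic_integrable (a b c : ℝ) :
    Integrable (Set.indicator (Set.Ico a b) (fun _ => c)) :=
  ((integrableOn_const_iff (C := c)).mpr (Or.inr measure_Ico_lt_top)).integrable_indicator measurableSet_Ico

private lemma max_add_max (a : ℝ) : max a 0 + max (-a) 0 = |a| := by
  rcases le_total a 0 with h | h
  · rw [max_eq_right h, max_eq_left (by linarith), abs_of_nonpos h]; ring
  · rw [max_eq_left h, max_eq_right (by linarith), abs_of_nonneg h]; ring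

private lemma max_pair (a b w : ℝ) : max (a - b) 0 * w + max (b - a) 0 * w = w * |a - b| := by
  have := max_add_max (a - b)
  rw [show -(a - b) = b - a by ring] at this
  rw [← this]; ring

/-- median property, upper half: for `t ≥ 0`, `#{f > t} ≤ #{f ≤ t}`. -/
private lemma med_upper {n : ℕ} (f : Fin n → ℝ)
    (hmed : ∀ c : ℝ, ∑ i, |f i| ≤ ∑ i, |f i - c|) (t : ℝ) (ht : 0 ≤ t) :
    (univ.filter fun i => t < f i).card ≤ (univ.filter fun i => f i ≤ t).card := by
  by_contra hcon
  push_neg at hcon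
  set A := univ.filter fun i : Fin n => t < f i with hA
  have hAne : A.Nonempty := Finset.card_pos.mp (lt_of_le_of_lt (Nat.zero_le _) hcon)
  have himg : (A.image f).Nonempty := hAne.image f
  set c := (A.image f).min' himg with hc
  have hcA : ∀ i ∈ A, c ≤ f i := fun i hi => Finset.min'_le _ _ (Finset.mem_image_of_mem f hi)
  have htc : t < c := by
    obtain ⟨i, hi, hfi⟩ := Finset.mem_image.mp (Finset.min'_mem (A.image f) himg)
    rw [hc, ← hfi]; exact (Finset.mem_filter.mp hi).2
  have key : ∀ i, |f i - c| ≤ |f i| + (if t < f i then -c else c) := by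
    intro i
    by_cases h : t < f i
    · have h1 : c ≤ f i := hcA i (Finset.mem_filter.mpr ⟨Finset.mem_univ i, h⟩)
      have h2 : 0 < f i := lt_of_le_of_lt ht h
      simp only [h, if_true]
      rw [abs_of_nonneg (by linarith : (0:ℝ) ≤ f i - c), abs_of_pos h2]; linarith
    · have h1 : f i ≤ t := not_lt.mp h
      simp only [h, if_false]
      rw [abs_of_nonpos (by linarith : f i - c ≤ 0)]
      linarith [neg_abs_le (f i)]
  have hsum : ∑ i, (if t < f i then -c else c)
      = (A.card : ℝ) * (-c) + ((univ.filter fun i : Fin n => ¬ t < f i).card : ℝ) * c := by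
    rw [Finset.sum_ite, Finset.sum_const, Finset.sum_const, nsmul_eq_mul, nsmul_eq_mul, ← hA]
  have hfle : (univ.filter fun i : Fin n => ¬ t < f i) = univ.filter fun i => f i ≤ t := by
    apply Finset.filter_congr; intro i _; simp [not_lt]
  rw [hfle] at hsum
  have hmc := hmed c
  have hle : ∑ i, |f i - c| ≤ ∑ i, |f i| + ∑ i, (if t < f i then -c else c) := by
    rw [← Finset.sum_add_distrib]
    exact Finset.sum_le_sum fun i _ => key i
  have hcast : ((univ.filter fun i : Fin n => f i ≤ t).card : ℝ) < (A.card : ℝ) := by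
    exact_mod_cast hcon
  have hcpos : 0 < c := lt_of_le_of_lt ht htc
  nlinarith [hmc, hle, hsum, hcast, hcpos]

/-- median property, lower half: for `t < 0`, `#{f ≤ t} ≤ #{f > t}`. -/
private lemma med_lower {n : ℕ} (f : Fin n → ℝ)
    (hmed : ∀ c : ℝ, ∑ i, |f i| ≤ ∑ i, |f i - c|) (t : ℝ) (ht : t < 0) :
    (univ.filter fun i => f i ≤ t).card ≤ (univ.filter fun i => t < f i).card := by
  by_contra hcon
  push_neg at hcon
  set B := univ.filter fun i : Fin n => f i ≤ t with hB
  have hBne : B.Nonempty := Finset.card_pos.mp (lt_of_le_of_lt (Nat.zero_le _) hcon)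
  have himg : (B.image f).Nonempty := hBne.image f
  set c := (B.image f).max' himg with hc
  have hcB : ∀ i ∈ B, f i ≤ c := fun i hi => Finset.le_max' _ _ (Finset.mem_image_of_mem f hi)
  have htc : c ≤ t := by
    obtain ⟨i, hi, hfi⟩ := Finset.mem_image.mp (Finset.max'_mem (B.image f) himg)
    rw [hc, ← hfi]; exact (Finset.mem_filter.mp hi).2
  have key : ∀ i, |f i - c| ≤ |f i| + (if f i ≤ t then c else -c) := by
    intro i
    by_cases h : f i ≤ t
    · have h1 : f i ≤ c := hcB i (Finset.mem_filter.mpr ⟨Finset.mem_univ i, h⟩)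
      have h2 : f i < 0 := lt_of_le_of_lt h ht
      simp only [h, if_true]
      rw [abs_of_nonpos (by linarith : f i - c ≤ 0), abs_of_neg h2]; linarith
    · have h1 : t < f i := not_le.mp h
      simp only [h, if_false]
      rw [abs_of_nonneg (by linarith : (0:ℝ) ≤ f i - c)]
      linarith [le_abs_self (f i)]
  have hsum : ∑ i, (if f i ≤ t then c else -c)
      = (B.card : ℝ) * c + ((univ.filter fun i : Fin n => ¬ f i ≤ t).card : ℝ) * (-c) := by
    rw [Finset.sum_ite, Finset.sum_const, Finset.sum_const, nsmul_eq_mul, nsmul_eq_mul, ← hB]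
  have hfle : (univ.filter fun i : Fin n => ¬ f i ≤ t) = univ.filter fun i => t < f i := by
    apply Finset.filter_congr; intro i _; simp [not_le]
  rw [hfle] at hsum
  have hmc := hmed c
  have hle : ∑ i, |f i - c| ≤ ∑ i, |f i| + ∑ i, (if f i ≤ t then c else -c) := by
    rw [← Finset.sum_add_distrib]
    exact Finset.sum_le_sum fun i _ => key i
  have hcast : ((univ.filter fun i : Fin n => t < f i).card : ℝ) < (B.card : ℝ) := by
    exact_mod_cast hcon
  have hcneg : c < 0 := lt_of_le_of_lt htc ht
  nlinarith [hmc, hle, hsum, hcast, hcneg]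

/-- Any threshold set with nonempty complement equals a threshold set at a value of `f`. -/
private lemma threshold_rep {n : ℕ} (f : Fin n → ℝ) (t : ℝ)
    (hne : (univ.filter fun i => f i ≤ t).Nonempty) :
    ∃ v ∈ univ.image f,
      (univ.filter fun i => t < f i) = (univ.filter fun i => v < f i) := by
  set B := univ.filter fun i : Fin n => f i ≤ t with hB
  have himg : (B.image f).Nonempty := hne.image f
  set v := (B.image f).max' himg with hv
  obtain ⟨i₀, hi₀, hfi₀⟩ := Finset.mem_image.mp (Finset.max'_mem (B.image f) himg)
  have hvt : v ≤ t := by rw [hv, ← hfi₀]; exact (Finset.mem_filter.mp hi₀).2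
  refine ⟨v, Finset.mem_image.mpr ⟨i₀, Finset.mem_univ i₀, hfi₀⟩, ?_⟩
  ext i
  simp only [Finset.mem_filter, Finset.mem_univ, true_and]
  constructor
  · intro h; exact lt_of_le_of_lt hvt h
  · intro h
    by_contra h'
    push_neg at h'
    have : f i ≤ v := Finset.le_max' _ _
      (Finset.mem_image_of_mem f (Finset.mem_filter.mpr ⟨Finset.mem_univ i, h'⟩))
    linarith

/-- Optimal thresholding: if `f ≠ 0` has median `0`, then `F₁(f)` is at least the best
ratio Cheeger cut obtained by thresholding `f`, i.e. there is a threshold `t` whose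
(nonempty, proper) level set `C_t = {i : f_i > t}` satisfies `RCC(C_t, C̄_t) ≤ F₁(f)`. -/
theorem thresholding_bound (n : ℕ) (hn : 2 ≤ n)
    (W : Fin n → Fin n → ℝ)
    (hsym : ∀ i j, W i j = W j i) (hnonneg : ∀ i j, 0 ≤ W i j)
    (f : Fin n → ℝ) (hf : f ≠ 0)
    (hmed : ∀ c : ℝ, ∑ i, |f i| ≤ ∑ i, |f i - c|) :
    ∃ t : ℝ, (Finset.univ.filter (fun i => t < f i)).Nonempty ∧
      Finset.univ.filter (fun i => t < f i) ≠ Finset.univ ∧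
      RCC W (Finset.univ.filter (fun i => t < f i)) ≤ F1 W f := by
  have hS1pos : 0 < ∑ i, |f i| := by
    obtain ⟨i0, hi0⟩ : ∃ i, f i ≠ 0 := by
      by_contra h; push_neg at h; exact hf (funext h)
    calc (0:ℝ) < |f i0| := abs_pos.mpr hi0
      _ ≤ ∑ i, |f i| := Finset.single_le_sum (f := fun i => |f i|) (fun i _ => abs_nonneg (f i)) (Finset.mem_univ i0)
  -- the candidate thresholds
  have hKne : ((univ.image f).filter fun v =>
      (univ.filter fun i => v < f i).Nonempty ∧
      (univ.filter fun i => v < f i) ≠ univ).Nonempty := by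
    have hnc : ∃ i j, f i < f j := by
      by_contra h
      push_neg at h
      have hconst : ∀ i j : Fin n, f i = f j := fun i j => le_antisymm (h j i) (h i j)
      obtain ⟨i0, hi0⟩ : ∃ i, f i ≠ 0 := by
        by_contra h'; push_neg at h'; exact hf (funext h')
      have hz : ∑ i, |f i - f i0| = 0 :=
        Finset.sum_eq_zero fun i _ => by rw [hconst i i0]; simp
      have := hmed (f i0)
      rw [hz] at this
      linarith
    obtain ⟨i, j, hij⟩ := hnc
    have hun : ((univ : Finset (Fin n)).image f).Nonempty :=
      Finset.Nonempty.image ⟨i, Finset.mem_univ i⟩ f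
    set v := (univ.image f).min' hun with hv
    obtain ⟨i0, _, hfi0⟩ := Finset.mem_image.mp (Finset.min'_mem (univ.image f) hun)
    refine ⟨v, Finset.mem_filter.mpr ⟨Finset.min'_mem _ _, ⟨j, ?_⟩, ?_⟩⟩
    · exact Finset.mem_filter.mpr ⟨Finset.mem_univ j,
        lt_of_le_of_lt (Finset.min'_le _ _ (Finset.mem_image_of_mem f (Finset.mem_univ i))) hij⟩
    · intro hu
      have : i0 ∈ univ.filter fun i => v < f i := by rw [hu]; exact Finset.mem_univ i0
      have := (Finset.mem_filter.mp this).2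
      rw [hfi0] at this
      exact lt_irrefl v this
  obtain ⟨t₀, ht₀K, ht₀min⟩ := Finset.exists_min_image _
    (fun v => RCC W (univ.filter fun i => v < f i)) hKne
  obtain ⟨hv1, hne₀, hproper₀⟩ := Finset.mem_filter.mp ht₀K
  set lam := RCC W (univ.filter fun i => t₀ < f i) with hlam
  -- minimality of lam over all threshold sets
  have hRCC_ge : ∀ t : ℝ, (univ.filter fun i => f i ≤ t).Nonempty →
      (univ.filter fun i => t < f i).Nonempty →
      (univ.filter fun i => t < f i) ≠ univ →
      lam ≤ RCC W (univ.filter fun i => t < f i) := by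
    intro t hBne hCne hCpr
    obtain ⟨v, hv, hveq⟩ := threshold_rep f t hBne
    rw [hveq]
    exact ht₀min v (Finset.mem_filter.mpr ⟨hv, hveq ▸ hCne, hveq ▸ hCpr⟩)
  -- the two layer-cake functions
  set G : ℝ → ℝ := fun t => ∑ i, (Set.indicator (Set.Ico 0 (f i)) (fun _ => (1:ℝ)) t
      + Set.indicator (Set.Ico (f i) 0) (fun _ => (1:ℝ)) t) with hG
  set Cut : ℝ → ℝ := fun t => ∑ i, ∑ j, Set.indicator (Set.Ico (f j) (f i)) (fun _ => W i j) t
    with hCut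
  have hGint : Integrable G :=
    integrable_finset_sum _ fun i _ => (indic_integrable _ _ _).add (indic_integrable _ _ _)
  have hCutint : Integrable Cut :=
    integrable_finset_sum _ fun i _ => integrable_finset_sum _ fun j _ => indic_integrable _ _ _
  have hGval : ∫ t, G t = ∑ i, |f i| := by
    simp only [hG]
    rw [MeasureTheory.integral_finset_sum
      (f := fun i t => Set.indicator (Set.Ico 0 (f i)) (fun _ => (1:ℝ)) t
        + Set.indicator (Set.Ico (f i) 0) (fun _ => (1:ℝ)) t) _
      (fun i _ => (indic_integrable _ _ _).add (indic_integrable _ _ _))]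
    refine Finset.sum_congr rfl fun i _ => ?_
    rw [integral_add (indic_integrable _ _ _) (indic_integrable _ _ _), indic_int, indic_int]
    rw [sub_zero, zero_sub, mul_one, mul_one, max_add_max]
  have hCutval : ∫ t, Cut t = TV W f := by
    have h1 : ∫ t, Cut t = ∑ i, ∑ j, max (f i - f j) 0 * W i j := by
      simp only [hCut]
      rw [integral_finset_sum _
        (fun i _ => integrable_finset_sum _ fun j _ => indic_integrable _ _ _)]
      refine Finset.sum_congr rfl fun i _ => ?_
      rw [integral_finset_sum _ fun j _ => indic_integrable _ _ _]
      exact Finset.sum_congr rfl fun j _ => indic_int _ _ _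
    have hswap : ∑ i, ∑ j, max (f j - f i) 0 * W j i
        = ∑ i, ∑ j, max (f i - f j) 0 * W i j := Finset.sum_comm
    have hdouble : 2 * (∑ i, ∑ j, max (f i - f j) 0 * W i j)
        = ∑ i, ∑ j, W i j * |f i - f j| := by
      rw [two_mul]
      nth_rewrite 2 [← hswap]
      rw [← Finset.sum_add_distrib]
      refine Finset.sum_congr rfl fun i _ => ?_
      rw [← Finset.sum_add_distrib]
      refine Finset.sum_congr rfl fun j _ => ?_
      rw [← hsym i j]
      exact max_pair _ _ _
    rw [h1, TV]
    linarith [hdouble]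
  -- pointwise inequality
  have hCut_eval : ∀ t, Cut t = ∑ i ∈ univ.filter (fun i => t < f i),
      ∑ j ∈ (univ.filter (fun i => t < f i))ᶜ, W i j := by
    intro t
    have hcompl : (univ.filter (fun i : Fin n => t < f i))ᶜ
        = univ.filter fun j => f j ≤ t := by
      ext j; simp [not_lt]
    rw [hcompl]
    simp only [hCut]
    simp only [Set.indicator_apply, Set.mem_Ico, Finset.sum_filter]
    refine Finset.sum_congr rfl fun i _ => ?_
    by_cases h : t < f i
    · simp only [h, if_true]
      refine Finset.sum_congr rfl fun j _ => ?_
      by_cases hj : f j ≤ t <;> simp [hj, h]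
    · simp [h]
  have hCut_nonneg : ∀ t, 0 ≤ Cut t := by
    intro t
    simp only [hCut]
    refine Finset.sum_nonneg fun i _ => Finset.sum_nonneg fun j _ => ?_
    exact Set.indicator_nonneg (fun _ _ => hnonneg i j) t
  have hpoint : ∀ t, lam * G t ≤ Cut t := by
    intro t
    have hcompl : (univ.filter (fun i : Fin n => t < f i))ᶜ
        = univ.filter fun j => f j ≤ t := by
      ext j; simp [not_lt]
    rcases le_or_gt 0 t with ht | ht
    · -- t ≥ 0 : G t = card of the threshold set
      have hGt : G t = ((univ.filter fun i => t < f i).card : ℝ) := by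
        simp only [hG]
        rw [← Finset.sum_boole]
        simp only [Set.indicator_apply, Set.mem_Ico]
        refine Finset.sum_congr rfl fun i _ => ?_
        rcases lt_or_ge t (f i) with h | h
        · simp [h, ht, not_lt.mpr ht]
        · simp [not_lt.mpr h, not_lt.mpr ht]
      by_cases hne : (univ.filter fun i => t < f i).Nonempty
      · have hcard := med_upper f hmed t ht
        have hBne : (univ.filter fun i => f i ≤ t).Nonempty :=
          Finset.card_pos.mp (lt_of_lt_of_le (Finset.card_pos.mpr hne) hcard)
        have hproper : (univ.filter fun i => t < f i) ≠ univ := by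
          intro hu
          obtain ⟨j, hj⟩ := hBne
          have : j ∈ univ.filter fun i => t < f i := by rw [hu]; exact Finset.mem_univ j
          exact absurd (Finset.mem_filter.mp this).2 (not_lt.mpr (Finset.mem_filter.mp hj).2)
        have hlamle := hRCC_ge t hBne hne hproper
        have hmin : min (((univ.filter fun i => t < f i).card : ℝ))
            ((((univ.filter fun i => t < f i))ᶜ.card : ℝ))
            = ((univ.filter fun i => t < f i).card : ℝ) := by
          apply min_eq_left
          rw [hcompl]
          exact_mod_cast hcard
        have hcardpos : (0:ℝ) < ((univ.filter fun i => t < f i).card : ℝ) := by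
          exact_mod_cast Finset.card_pos.mpr hne
        have hre : RCC W (univ.filter fun i => t < f i)
            * ((univ.filter fun i => t < f i).card : ℝ)
            = ∑ i ∈ univ.filter (fun i => t < f i),
              ∑ j ∈ (univ.filter (fun i => t < f i))ᶜ, W i j := by
          rw [RCC, hmin, div_mul_cancel₀ _ (ne_of_gt hcardpos)]
        rw [hGt, hCut_eval t, ← hre]
        exact mul_le_mul_of_nonneg_right hlamle (le_of_lt hcardpos)
      · rw [hGt, Finset.not_nonempty_iff_eq_empty.mp hne]
        simpa using hCut_nonneg t
    · -- t < 0 : G t = card of the complement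
      have hGt : G t = ((univ.filter fun i => f i ≤ t).card : ℝ) := by
        simp only [hG]
        rw [← Finset.sum_boole]
        simp only [Set.indicator_apply, Set.mem_Ico]
        refine Finset.sum_congr rfl fun i _ => ?_
        rcases le_or_gt (f i) t with h | h
        · simp [h, ht, not_le.mpr (lt_of_le_of_lt h ht)]
        · simp [not_le.mpr h, not_le.mpr ht, not_lt.mpr (le_of_lt h)]
      by_cases hBne : (univ.filter fun i => f i ≤ t).Nonempty
      · have hcard := med_lower f hmed t ht
        have hne : (univ.filter fun i => t < f i).Nonempty :=
          Finset.card_pos.mp (lt_of_lt_of_le (Finset.card_pos.mpr hBne) hcard)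
        have hproper : (univ.filter fun i => t < f i) ≠ univ := by
          intro hu
          obtain ⟨j, hj⟩ := hBne
          have : j ∈ univ.filter fun i => t < f i := by rw [hu]; exact Finset.mem_univ j
          exact absurd (Finset.mem_filter.mp this).2 (not_lt.mpr (Finset.mem_filter.mp hj).2)
        have hlamle := hRCC_ge t hBne hne hproper
        have hmin : min (((univ.filter fun i => t < f i).card : ℝ))
            ((((univ.filter fun i => t < f i))ᶜ.card : ℝ))
            = ((univ.filter fun i => f i ≤ t).card : ℝ) := by
          rw [hcompl]
          apply min_eq_right
          exact_mod_cast hcard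
        have hcardpos : (0:ℝ) < ((univ.filter fun i => f i ≤ t).card : ℝ) := by
          exact_mod_cast Finset.card_pos.mpr hBne
        have hre : RCC W (univ.filter fun i => t < f i)
            * ((univ.filter fun i => f i ≤ t).card : ℝ)
            = ∑ i ∈ univ.filter (fun i => t < f i),
              ∑ j ∈ (univ.filter (fun i => t < f i))ᶜ, W i j := by
          rw [RCC, hmin, div_mul_cancel₀ _ (ne_of_gt hcardpos)]
        rw [hGt, hCut_eval t, ← hre]
        exact mul_le_mul_of_nonneg_right hlamle (le_of_lt hcardpos)
      · rw [hGt, Finset.not_nonempty_iff_eq_empty.mp hBne]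
        simpa using hCut_nonneg t
  -- conclude
  refine ⟨t₀, hne₀, hproper₀, ?_⟩
  rw [F1, le_div_iff₀ hS1pos]
  calc lam * (∑ i, |f i|) = ∫ t, lam * G t := by
        rw [MeasureTheory.integral_const_mul, hGval]
    _ ≤ ∫ t, Cut t := integral_mono (hGint.const_mul lam) hCutint hpoint
    _ = TV W f := hCutval
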